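/- Let V be a word consisting of u North steps and d South steps, and let H be a word consisting of r East steps and l West steps. Then the number of shuffles of V and H with even peak-count minus the number with odd peak-count equals Σ_k (−1)^k · C(r+u, u−k) · C(l+d, d+k), where the sum is over all integers k and C(a,b) denotes the binomial coefficient, taken to be 0 unless 0 ≤ b ≤ a. -/

import Mathlib

inductive Step : Type
  | E | W | N | S
deriving DecidableEq, Repr

open Step

/-- A step is vertical (North or South). -/
def isVert : Step → Bool
  | N => true
  | S => true
  | _ => false

/-- A step is horizontal (East or West). -/
def isHoriz : Step → Bool
  | E => true
  | W => true
  | _ => false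

/-- `σ` is a shuffle (interleaving) of the vertical path `V` and horizontal path `H`:
its subsequence of vertical steps is `V` and its subsequence of horizontal steps is `H`. -/
def IsShuffle (V H σ : List Step) : Prop :=
  σ.filter isVert = V ∧ σ.filter isHoriz = H

/-- The list of adjacent pairs `(σ_i, σ_{i+1})` of a list. -/
def pairs (σ : List Step) : List (Step × Step) := σ.zip σ.tail

/-- Signed peak-count: (# of (N,W) adjacent pairs) − (# of (E,S) adjacent pairs). -/
def signedPeak (σ : List Step) : ℤ :=
  (((pairs σ).filter (fun p => decide (p.1 = N ∧ p.2 = W))).length : ℤ)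
  - (((pairs σ).filter (fun p => decide (p.1 = E ∧ p.2 = S))).length : ℤ)

/-- Peak-count: (# of (N,W) adjacent pairs) + (# of (E,S) adjacent pairs). -/
def peakCount (σ : List Step) : ℕ :=
  ((pairs σ).filter (fun p => decide (p.1 = N ∧ p.2 = W))).length
  + ((pairs σ).filter (fun p => decide (p.1 = E ∧ p.2 = S))).length

/-- Binomial coefficient with integer arguments, equal to 0 unless `0 ≤ b ≤ a`. -/
def zch (a b : ℤ) : ℕ := if 0 ≤ b ∧ b ≤ a then a.toNat.choose b.toNat else 0

/- auxiliary development -/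

/-- all shuffles of V and H -/
def shuf : List Step → List Step → List (List Step)
  | [], H => [H]
  | V, [] => [V]
  | a :: V, b :: H =>
      ((shuf V (b :: H)).map (a :: ·)) ++ ((shuf (a :: V) H).map (b :: ·))
  termination_by V H => V.length + H.length

@[simp] lemma shuf_nil_left (H : List Step) : shuf [] H = [H] := by
  cases H <;> rw [shuf]

@[simp] lemma shuf_nil_right (V : List Step) : shuf V [] = [V] := by
  cases V <;> rw [shuf] <;> simp

lemma shuf_cons_cons (a b : Step) (V H : List Step) :
    shuf (a :: V) (b :: H)
      = ((shuf V (b :: H)).map (a :: ·)) ++ ((shuf (a :: V) H).map (b :: ·)) := by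
  rw [shuf]

/-- totality of the step classification -/
lemma vert_or_horiz (s : Step) : isVert s = true ∨ isHoriz s = true := by
  cases s <;> simp [isVert, isHoriz]

lemma not_vert_of_horiz {s : Step} (h : isHoriz s = true) : isVert s = false := by
  cases s <;> simp_all [isVert, isHoriz]

lemma not_horiz_of_vert {s : Step} (h : isVert s = true) : isHoriz s = false := by
  cases s <;> simp_all [isVert, isHoriz]

/-- the weight -/
def w (σ : List Step) : ℤ := (-1) ^ peakCount σ

lemma pairs_cons_cons (a b : Step) (τ : List Step) :
    pairs (a :: b :: τ) = (a, b) :: pairs (b :: τ) := by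
  simp [pairs]

lemma peakCount_cons (a b : Step) (τ : List Step) :
    peakCount (a :: b :: τ)
      = peakCount (b :: τ) + (if (a = N ∧ b = W) ∨ (a = E ∧ b = S) then 1 else 0) := by
  simp only [peakCount, pairs_cons_cons, List.filter_cons]
  by_cases h1 : a = N ∧ b = W
  · obtain ⟨rfl, rfl⟩ := h1; simp; omega
  · by_cases h2 : a = E ∧ b = S
    · obtain ⟨rfl, rfl⟩ := h2; simp; omega
    · simp [h1, h2]

lemma w_cons_of_not_peak {a b : Step} (h : ¬ ((a = N ∧ b = W) ∨ (a = E ∧ b = S)))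
    (τ : List Step) : w (a :: b :: τ) = w (b :: τ) := by
  simp [w, peakCount_cons, h]

lemma w_cons_of_peak {a b : Step} (h : (a = N ∧ b = W) ∨ (a = E ∧ b = S))
    (τ : List Step) : w (a :: b :: τ) = - w (b :: τ) := by
  simp [w, peakCount_cons, h, pow_succ]

@[simp] lemma w_nil : w [] = 1 := rfl

@[simp] lemma w_singleton (a : Step) : w [a] = 1 := rfl

lemma w_cons_S (τ : List Step) : w (S :: τ) = w τ := by
  cases τ with
  | nil => rfl
  | cons b τ => exact w_cons_of_not_peak (by simp) τ

lemma w_cons_W (τ : List Step) : w (W :: τ) = w τ := by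
  cases τ with
  | nil => rfl
  | cons b τ => exact w_cons_of_not_peak (by simp) τ

lemma w_cons_N {τ : List Step} (h : τ.head? ≠ some W) : w (N :: τ) = w τ := by
  cases τ with
  | nil => rfl
  | cons b τ =>
    refine w_cons_of_not_peak ?_ τ
    simp at h
    simp [h]

lemma w_cons_E {τ : List Step} (h : τ.head? ≠ some S) : w (E :: τ) = w τ := by
  cases τ with
  | nil => rfl
  | cons b τ =>
    refine w_cons_of_not_peak ?_ τ
    simp at h
    simp [h]

lemma w_horiz (H : List Step) (hH : ∀ s ∈ H, isHoriz s = true) : w H = 1 := by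
  induction H with
  | nil => rfl
  | cons a H ih =>
    cases H with
    | nil => rfl
    | cons b τ =>
      rw [w_cons_of_not_peak, ih]
      · intro s hs; exact hH s (List.mem_cons_of_mem _ hs)
      · have ha := hH a (by simp)
        have hb := hH b (by simp)
        cases a <;> cases b <;> simp_all [isHoriz]

lemma w_vert (V : List Step) (hV : ∀ s ∈ V, isVert s = true) : w V = 1 := by
  induction V with
  | nil => rfl
  | cons a V ih =>
    cases V with
    | nil => rfl
    | cons b τ =>
      rw [w_cons_of_not_peak, ih]
      · intro s hs; exact hV s (List.mem_cons_of_mem _ hs)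
      · have ha := hV a (by simp)
        have hb := hV b (by simp)
        cases a <;> cases b <;> simp_all [isVert]

def wsum (L : List (List Step)) : ℤ := (L.map w).sum

lemma wsum_append (L1 L2 : List (List Step)) : wsum (L1 ++ L2) = wsum L1 + wsum L2 := by
  simp [wsum]

lemma wsum_map_cons (a : Step) (L : List (List Step)) :
    wsum (L.map (a :: ·)) = (L.map (fun σ => w (a :: σ))).sum := by
  simp only [wsum, List.map_map]; rfl

/-- membership characterization -/
lemma mem_shuf : ∀ (n : ℕ) (V H : List Step), V.length + H.length ≤ n →
    (∀ s ∈ V, isVert s = true) → (∀ s ∈ H, isHoriz s = true) →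
    ∀ σ, σ ∈ shuf V H ↔ IsShuffle V H σ := by
  intro n
  induction n with
  | zero =>
    intro V H hlen hV hH σ
    have : V = [] := by cases V <;> simp_all
    have : H = [] := by cases H <;> simp_all
    subst this; subst ‹V = []›
    simp only [shuf_nil_left, List.mem_singleton, IsShuffle]
    constructor
    · rintro rfl; simp
    · rintro ⟨h1, h2⟩
      rw [← h2]
      symm
      apply List.filter_eq_self.mpr
      intro s hs
      rcases vert_or_horiz s with h | h
      · exfalso
        have : s ∈ List.filter isVert σ := List.mem_filter.mpr ⟨hs, h⟩
        rw [h1] at this; simp at this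
      · exact h
  | succ n ih =>
    intro V H hlen hV hH σ
    cases V with
    | nil =>
      simp only [shuf_nil_left, List.mem_singleton, IsShuffle]
      constructor
      · rintro rfl
        constructor
        · apply List.filter_eq_nil_iff.mpr
          intro s hs
          simp [not_vert_of_horiz (hH s hs)]
        · exact List.filter_eq_self.mpr hH
      · rintro ⟨h1, h2⟩
        rw [← h2]
        symm
        apply List.filter_eq_self.mpr
        intro s hs
        rcases vert_or_horiz s with h | h
        · exfalso
          have : s ∈ List.filter isVert σ := List.mem_filter.mpr ⟨hs, h⟩
          rw [h1] at this; simp at this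
        · exact h
    | cons x V' =>
      cases H with
      | nil =>
        simp only [shuf_nil_right, List.mem_singleton, IsShuffle]
        constructor
        · rintro rfl
          constructor
          · exact List.filter_eq_self.mpr hV
          · apply List.filter_eq_nil_iff.mpr
            intro s hs
            simp [not_horiz_of_vert (hV s hs)]
        · rintro ⟨h1, h2⟩
          rw [← h1]
          symm
          apply List.filter_eq_self.mpr
          intro s hs
          rcases vert_or_horiz s with h | h
          · exact h
          · exfalso
            have : s ∈ List.filter isHoriz σ := List.mem_filter.mpr ⟨hs, h⟩
            rw [h2] at this; simp at this
      | cons y H' =>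
        rw [shuf_cons_cons]
        have hx : isVert x = true := hV x (by simp)
        have hy : isHoriz y = true := hH y (by simp)
        have hV' : ∀ s ∈ V', isVert s = true := fun s hs => hV s (by simp [hs])
        have hH' : ∀ s ∈ H', isHoriz s = true := fun s hs => hH s (by simp [hs])
        have l1 : V'.length + (y :: H').length ≤ n := by simp at hlen ⊢; omega
        have l2 : (x :: V').length + H'.length ≤ n := by simp at hlen ⊢; omega
        simp only [List.mem_append, List.mem_map]
        constructor
        · rintro (⟨τ, hτ, rfl⟩ | ⟨τ, hτ, rfl⟩)
          · obtain ⟨h1, h2⟩ := (ih V' (y :: H') l1 hV' hH τ).mp hτ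
            refine ⟨?_, ?_⟩
            · rw [List.filter_cons, if_pos hx, h1]
            · rw [List.filter_cons, if_neg (by simp [not_horiz_of_vert hx]), h2]
          · obtain ⟨h1, h2⟩ := (ih (x :: V') H' l2 hV hH' τ).mp hτ
            refine ⟨?_, ?_⟩
            · rw [List.filter_cons, if_neg (by simp [not_vert_of_horiz hy]), h1]
            · rw [List.filter_cons, if_pos hy, h2]
        · rintro ⟨h1, h2⟩
          cases σ with
          | nil => simp at h1
          | cons c ρ =>
            rcases vert_or_horiz c with hc | hc
            · left
              rw [List.filter_cons, if_pos hc] at h1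
              rw [List.filter_cons, if_neg (by simp [not_horiz_of_vert hc])] at h2
              injection h1 with hcx h1'
              subst hcx
              exact ⟨ρ, (ih V' (y :: H') l1 hV' hH ρ).mpr ⟨h1', h2⟩, rfl⟩
            · right
              rw [List.filter_cons, if_neg (by simp [not_vert_of_horiz hc])] at h1
              rw [List.filter_cons, if_pos hc] at h2
              injection h2 with hcy h2'
              subst hcy
              exact ⟨ρ, (ih (x :: V') H' l2 hV hH' ρ).mpr ⟨h1, h2'⟩, rfl⟩

lemma nodup_shuf : ∀ (n : ℕ) (V H : List Step), V.length + H.length ≤ n →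
    (∀ s ∈ V, isVert s = true) → (∀ s ∈ H, isHoriz s = true) →
    (shuf V H).Nodup := by
  intro n
  induction n with
  | zero =>
    intro V H hlen hV hH
    have : V = [] := by cases V <;> simp_all
    subst this
    simp
  | succ n ih =>
    intro V H hlen hV hH
    cases V with
    | nil => simp
    | cons x V' =>
      cases H with
      | nil => simp
      | cons y H' =>
        rw [shuf_cons_cons]
        have hx : isVert x = true := hV x (by simp)
        have hy : isHoriz y = true := hH y (by simp)
        have hV' : ∀ s ∈ V', isVert s = true := fun s hs => hV s (by simp [hs])
        have hH' : ∀ s ∈ H', isHoriz s = true := fun s hs => hH s (by simp [hs])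
        have l1 : V'.length + (y :: H').length ≤ n := by simp at hlen ⊢; omega
        have l2 : (x :: V').length + H'.length ≤ n := by simp at hlen ⊢; omega
        have hxy : x ≠ y := by
          intro h; subst h
          exact absurd hy (by simp [not_horiz_of_vert hx])
        apply List.Nodup.append
        · exact ((ih V' (y :: H') l1 hV' hH).map (fun a b h => by simpa using h))
        · exact ((ih (x :: V') H' l2 hV hH').map (fun a b h => by simpa using h))
        · intro σ h1 h2
          simp only [List.mem_map] at h1 h2
          obtain ⟨τ1, _, rfl⟩ := h1
          obtain ⟨τ2, _, he⟩ := h2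
          injection he with h
          exact hxy h.symm

lemma head_of_isShuffle {A B : List Step} {c : Step} {τ : List Step}
    (h : IsShuffle A B (c :: τ)) :
    (isVert c = true ∧ A.head? = some c) ∨ (isHoriz c = true ∧ B.head? = some c) := by
  rcases vert_or_horiz c with hc | hc
  · left
    refine ⟨hc, ?_⟩
    have h1 := h.1
    rw [List.filter_cons, if_pos hc] at h1
    rw [← h1]
    rfl
  · right
    refine ⟨hc, ?_⟩
    have h2 := h.2
    rw [List.filter_cons, if_pos hc] at h2
    rw [← h2]
    rfl

lemma sum_map_neg (L : List (List Step)) (f : List Step → ℤ) :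
    (L.map fun τ => -(f τ)).sum = -((L.map f).sum) := by
  induction L <;> simp_all
  ring

lemma sum_w_S (L : List (List Step)) :
    (L.map (fun σ => w (S :: σ))).sum = wsum L := by
  unfold wsum
  congr 1
  exact List.map_congr_left (fun σ _ => w_cons_S σ)

lemma sum_w_W (L : List (List Step)) :
    (L.map (fun σ => w (W :: σ))).sum = wsum L := by
  unfold wsum
  congr 1
  exact List.map_congr_left (fun σ _ => w_cons_W σ)

lemma sum_w_N (A B : List Step) (hA : ∀ s ∈ A, isVert s = true)
    (hB : ∀ s ∈ B, isHoriz s = true) (hBW : B.head? ≠ some W) :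
    ((shuf A B).map (fun σ => w (N :: σ))).sum = wsum (shuf A B) := by
  unfold wsum
  congr 1
  apply List.map_congr_left
  intro σ hσ
  have hs := (mem_shuf (A.length + B.length) A B le_rfl hA hB σ).mp hσ
  cases σ with
  | nil => rfl
  | cons c τ =>
    apply w_cons_N
    rcases head_of_isShuffle hs with ⟨hc, _⟩ | ⟨_, hBc⟩
    · simp only [List.head?_cons, ne_eq, Option.some.injEq]
      intro h; subst h; simp [isVert] at hc
    · simp only [List.head?_cons, ne_eq, Option.some.injEq]
      intro h; subst h; exact hBW hBc

lemma sum_w_E (A B : List Step) (hA : ∀ s ∈ A, isVert s = true)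
    (hB : ∀ s ∈ B, isHoriz s = true) (hAS : A.head? ≠ some S) :
    ((shuf A B).map (fun σ => w (E :: σ))).sum = wsum (shuf A B) := by
  unfold wsum
  congr 1
  apply List.map_congr_left
  intro σ hσ
  have hs := (mem_shuf (A.length + B.length) A B le_rfl hA hB σ).mp hσ
  cases σ with
  | nil => rfl
  | cons c τ =>
    apply w_cons_E
    rcases head_of_isShuffle hs with ⟨_, hAc⟩ | ⟨hc, _⟩
    · simp only [List.head?_cons, ne_eq, Option.some.injEq]
      intro h; subst h; exact hAS hAc
    · simp only [List.head?_cons, ne_eq, Option.some.injEq]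
      intro h; subst h; simp [isHoriz] at hc

lemma sum_w_N_W (A B' : List Step) (hA : ∀ s ∈ A, isVert s = true) :
    ((shuf A (W :: B')).map (fun σ => w (N :: σ))).sum
      = wsum (shuf A (W :: B')) - 2 * wsum (shuf A B') := by
  cases A with
  | nil =>
    simp only [shuf_nil_left, List.map_cons, List.map_nil, List.sum_cons, List.sum_nil]
    rw [w_cons_of_peak (Or.inl ⟨rfl, rfl⟩)]
    simp [wsum, w_cons_W]
    ring
  | cons x A' =>
    have hx : isVert x = true := hA x (by simp)
    rw [shuf_cons_cons, List.map_append, List.sum_append, wsum_append,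
      List.map_map, List.map_map]
    have e1 : (fun σ => w (N :: σ)) ∘ (x :: ·) = fun σ => w (x :: σ) := by
      funext σ
      exact w_cons_of_not_peak (by cases x <;> simp_all [isVert]) σ
    have e2 : (fun σ => w (N :: σ)) ∘ (W :: ·) = fun τ => -(w τ) := by
      funext τ
      show w (N :: W :: τ) = -(w τ)
      rw [w_cons_of_peak (Or.inl ⟨rfl, rfl⟩), w_cons_W]
    rw [e1, e2, sum_map_neg]
    have e3 : wsum ((shuf A' (W :: B')).map (x :: ·))
        = ((shuf A' (W :: B')).map (fun σ => w (x :: σ))).sum := wsum_map_cons _ _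
    have e4 : wsum ((shuf (x :: A') B').map (W :: ·)) = wsum (shuf (x :: A') B') := by
      rw [wsum_map_cons, sum_w_W]
    rw [e3, e4]
    unfold wsum
    ring

lemma sum_w_E_S (A' B : List Step) (hB : ∀ s ∈ B, isHoriz s = true) :
    ((shuf (S :: A') B).map (fun σ => w (E :: σ))).sum
      = wsum (shuf (S :: A') B) - 2 * wsum (shuf A' B) := by
  cases B with
  | nil =>
    simp only [shuf_nil_right, List.map_cons, List.map_nil, List.sum_cons, List.sum_nil]
    rw [w_cons_of_peak (Or.inr ⟨rfl, rfl⟩)]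
    simp [wsum, w_cons_S]
    ring
  | cons y B' =>
    have hy : isHoriz y = true := hB y (by simp)
    rw [shuf_cons_cons, List.map_append, List.sum_append, wsum_append,
      List.map_map, List.map_map]
    have e1 : (fun σ => w (E :: σ)) ∘ (S :: ·) = fun σ => -(w σ) := by
      funext σ
      show w (E :: S :: σ) = -(w σ)
      rw [w_cons_of_peak (Or.inr ⟨rfl, rfl⟩), w_cons_S]
    have e2 : (fun σ => w (E :: σ)) ∘ (y :: ·) = fun τ => w (y :: τ) := by
      funext τ
      exact w_cons_of_not_peak (by cases y <;> simp_all [isHoriz]) τ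
    rw [e1, e2, sum_map_neg]
    have e3 : wsum ((shuf A' (y :: B')).map (S :: ·)) = wsum (shuf A' (y :: B')) := by
      rw [wsum_map_cons, sum_w_S]
    have e4 : wsum ((shuf (S :: A') B').map (y :: ·))
        = ((shuf (S :: A') B').map (fun τ => w (y :: τ))).sum := wsum_map_cons _ _
    rw [e3, e4]
    unfold wsum
    ring

open Polynomial in
noncomputable def phi (u d r l : ℕ) : ℤ :=
  (-1) ^ d * (((1 + X) ^ (r + u) * (1 - X) ^ (l + d) : ℤ[X])).coeff (u + d)

open Polynomial

lemma phi_base_H (u d : ℕ) : phi u d 0 0 = 1 := by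
  unfold phi
  have h1 : ((1 + X : ℤ[X])).leadingCoeff = 1 := by
    rw [add_comm]
    exact (monic_X_add_C 1).leadingCoeff
  have h2 : ((1 - X : ℤ[X])).leadingCoeff = -1 := by
    have : (1 - X : ℤ[X]) = -(X - C 1) := by simp [sub_eq_add_neg]
    rw [this, leadingCoeff_neg, (monic_X_sub_C (1 : ℤ)).leadingCoeff]
  have hd1 : ((1 + X : ℤ[X])).natDegree = 1 := by
    rw [add_comm]; exact natDegree_X_add_C 1
  have hd2 : ((1 - X : ℤ[X])).natDegree = 1 := by
    have : (1 - X : ℤ[X]) = -(X - C 1) := by simp [sub_eq_add_neg]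
    rw [this, natDegree_neg, natDegree_X_sub_C]
  have hne1 : ((1 + X : ℤ[X])) ≠ 0 := by
    intro h
    have := congrArg natDegree h
    simp [hd1] at this
  have hne2 : ((1 - X : ℤ[X])) ≠ 0 := by
    intro h
    have := congrArg natDegree h
    simp [hd2] at this
  have hdeg : (((1 + X) ^ (0 + u) * (1 - X) ^ (0 + d) : ℤ[X])).natDegree = u + d := by
    rw [natDegree_mul (pow_ne_zero _ hne1) (pow_ne_zero _ hne2),
      natDegree_pow, natDegree_pow, hd1, hd2]
    ring
  rw [← hdeg, ← leadingCoeff, leadingCoeff_mul, leadingCoeff_pow, leadingCoeff_pow, h1, h2]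
  simp [← pow_add]

lemma phi_base_V (r l : ℕ) : phi 0 0 r l = 1 := by
  unfold phi
  rw [coeff_zero_eq_eval_zero]
  simp

lemma phi_NE (u d r l : ℕ) :
    phi (u + 1) d (r + 1) l = phi u d (r + 1) l + phi (u + 1) d r l := by
  unfold phi
  have e1 : u + 1 + d = (u + d) + 1 := by omega
  rw [e1]
  have h : ((1 + X) ^ (r + 1 + (u + 1)) * (1 - X) ^ (l + d) : ℤ[X])
      = X * ((1 + X) ^ (r + 1 + u) * (1 - X) ^ (l + d))
        + (1 + X) ^ (r + (u + 1)) * (1 - X) ^ (l + d) := by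
    have : r + 1 + (u + 1) = (r + 1 + u) + 1 := by omega
    rw [this]
    have : r + (u + 1) = (r + 1 + u) := by omega
    rw [this]
    ring
  rw [h, coeff_add, coeff_X_mul]
  ring

lemma phi_NW (u d r l : ℕ) :
    phi (u + 1) d r (l + 1) = phi u d r (l + 1) + phi (u + 1) d r l - 2 * phi u d r l := by
  unfold phi
  have e1 : u + 1 + d = (u + d) + 1 := by omega
  rw [e1]
  have h : ((1 + X) ^ (r + (u + 1)) * (1 - X) ^ (l + 1 + d) : ℤ[X])
      = X * ((1 + X) ^ (r + u) * (1 - X) ^ (l + 1 + d))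
        + (1 + X) ^ (r + (u + 1)) * (1 - X) ^ (l + d)
        - C 2 * (X * ((1 + X) ^ (r + u) * (1 - X) ^ (l + d))) := by
    have h1 : r + (u + 1) = (r + u) + 1 := by omega
    have h2 : l + 1 + d = (l + d) + 1 := by omega
    rw [h1, h2]
    simp only [map_ofNat]
    ring
  rw [h, coeff_sub, coeff_add, coeff_X_mul, coeff_C_mul, coeff_X_mul]
  ring

lemma phi_SE (u d r l : ℕ) :
    phi u (d + 1) (r + 1) l = phi u d (r + 1) l + phi u (d + 1) r l - 2 * phi u d r l := by
  unfold phi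
  have e1 : u + (d + 1) = (u + d) + 1 := by omega
  rw [e1]
  have h : ((1 + X) ^ (r + 1 + u) * (1 - X) ^ (l + (d + 1)) : ℤ[X])
      = -(X * ((1 + X) ^ (r + 1 + u) * (1 - X) ^ (l + d)))
        + (1 + X) ^ (r + u) * (1 - X) ^ (l + (d + 1))
        + C 2 * (X * ((1 + X) ^ (r + u) * (1 - X) ^ (l + d))) := by
    have h1 : r + 1 + u = (r + u) + 1 := by omega
    have h2 : l + (d + 1) = (l + d) + 1 := by omega
    rw [h1, h2]
    simp only [map_ofNat]
    ring
  rw [h, coeff_add, coeff_add, coeff_neg, coeff_X_mul, coeff_C_mul, coeff_X_mul]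
  ring

lemma phi_SW (u d r l : ℕ) :
    phi u (d + 1) r (l + 1) = phi u d r (l + 1) + phi u (d + 1) r l := by
  unfold phi
  have e1 : u + (d + 1) = (u + d) + 1 := by omega
  rw [e1]
  have h : ((1 + X) ^ (r + u) * (1 - X) ^ (l + 1 + (d + 1)) : ℤ[X])
      = -(X * ((1 + X) ^ (r + u) * (1 - X) ^ (l + 1 + d)))
        + (1 + X) ^ (r + u) * (1 - X) ^ (l + (d + 1)) := by
    have h1 : l + 1 + (d + 1) = (l + 1 + d) + 1 := by omega
    have h2 : l + (d + 1) = l + 1 + d := by omega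
    rw [h1, h2]
    ring
  rw [h, coeff_add, coeff_neg, coeff_X_mul]
  ring

lemma wsum_shuf : ∀ (n : ℕ) (V H : List Step), V.length + H.length ≤ n →
    (∀ s ∈ V, isVert s = true) → (∀ s ∈ H, isHoriz s = true) →
    wsum (shuf V H) = phi (V.count N) (V.count S) (H.count E) (H.count W) := by
  intro n
  induction n with
  | zero =>
    intro V H hlen hV hH
    have hv : V = [] := by cases V <;> simp_all
    have hh : H = [] := by cases H <;> simp_all
    subst hv; subst hh
    simpa [wsum] using (phi_base_V 0 0).symm
  | succ n ih =>
    intro V H hlen hV hH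
    cases V with
    | nil =>
      rw [shuf_nil_left]
      have : wsum [H] = 1 := by simp [wsum, w_horiz H hH]
      rw [this]
      simp only [List.count_nil]
      exact (phi_base_V _ _).symm
    | cons x V' =>
      cases H with
      | nil =>
        rw [shuf_nil_right]
        have : wsum [x :: V'] = 1 := by simp [wsum, w_vert _ hV]
        rw [this]
        simp only [List.count_nil]
        exact (phi_base_H _ _).symm
      | cons y H' =>
        have hx : isVert x = true := hV x (by simp)
        have hy : isHoriz y = true := hH y (by simp)
        have hV' : ∀ s ∈ V', isVert s = true := fun s hs => hV s (by simp [hs])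
        have hH' : ∀ s ∈ H', isHoriz s = true := fun s hs => hH s (by simp [hs])
        have l1 : V'.length + (y :: H').length ≤ n := by simp at hlen ⊢; omega
        have l2 : (x :: V').length + H'.length ≤ n := by simp at hlen ⊢; omega
        have l3 : V'.length + H'.length ≤ n := by simp at hlen ⊢; omega
        have ih1 := ih V' (y :: H') l1 hV' hH
        have ih2 := ih (x :: V') H' l2 hV hH'
        have ih3 := ih V' H' l3 hV' hH'
        rw [shuf_cons_cons, wsum_append, wsum_map_cons, wsum_map_cons]
        cases x with
        | E => simp [isVert] at hx
        | W => simp [isVert] at hx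
        | N =>
          cases y with
          | N => simp [isHoriz] at hy
          | S => simp [isHoriz] at hy
          | E =>
            rw [sum_w_N V' (E :: H') hV' hH (by simp),
              sum_w_E (N :: V') H' hV hH' (by simp), ih1, ih2]
            simp only [List.count_cons_self, List.count_cons_of_ne (by simp : (N : Step) ≠ S),
              List.count_cons_of_ne (by simp : (S : Step) ≠ N),
              List.count_cons_of_ne (by simp : (E : Step) ≠ W),
              List.count_cons_of_ne (by simp : (W : Step) ≠ E)]
            exact (phi_NE _ _ _ _).symm
          | W =>
            rw [sum_w_N_W V' H' hV', sum_w_W, ih1, ih2, ih3]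
            simp only [List.count_cons_self, List.count_cons_of_ne (by simp : (N : Step) ≠ S),
              List.count_cons_of_ne (by simp : (S : Step) ≠ N),
              List.count_cons_of_ne (by simp : (E : Step) ≠ W),
              List.count_cons_of_ne (by simp : (W : Step) ≠ E)]
            linarith [phi_NW (V'.count N) (V'.count S) (H'.count E) (H'.count W)]
        | S =>
          cases y with
          | N => simp [isHoriz] at hy
          | S => simp [isHoriz] at hy
          | E =>
            rw [sum_w_S, sum_w_E_S V' H' hH', ih1, ih2, ih3]
            simp only [List.count_cons_self, List.count_cons_of_ne (by simp : (N : Step) ≠ S),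
              List.count_cons_of_ne (by simp : (S : Step) ≠ N),
              List.count_cons_of_ne (by simp : (E : Step) ≠ W),
              List.count_cons_of_ne (by simp : (W : Step) ≠ E)]
            linarith [phi_SE (V'.count N) (V'.count S) (H'.count E) (H'.count W)]
          | W =>
            rw [sum_w_S, sum_w_W, ih1, ih2]
            simp only [List.count_cons_self, List.count_cons_of_ne (by simp : (N : Step) ≠ S),
              List.count_cons_of_ne (by simp : (S : Step) ≠ N),
              List.count_cons_of_ne (by simp : (E : Step) ≠ W),
              List.count_cons_of_ne (by simp : (W : Step) ≠ E)]
            exact (phi_SW _ _ _ _).symm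

lemma neg_one_pow_congr' {a b : ℕ} (h : a % 2 = b % 2) : ((-1 : ℤ)) ^ a = (-1) ^ b := by
  rcases Nat.even_or_odd a with ha | ha
  · have hb : Even b := by rw [Nat.even_iff] at ha ⊢; omega
    rw [ha.neg_one_pow, hb.neg_one_pow]
  · have hb : Odd b := by rw [Nat.odd_iff] at ha ⊢; omega
    rw [ha.neg_one_pow, hb.neg_one_pow]

lemma coeff_one_sub_X_pow (n k : ℕ) :
    ((1 - X : ℤ[X]) ^ n).coeff k = (-1) ^ k * n.choose k := by
  have h : (1 - X : ℤ[X]) = -(X + C (-1)) := by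
    simp only [map_neg, map_one]
    ring
  have h2 : ((-(X + C (-1)) : ℤ[X])) ^ n = C ((-1) ^ n) * (X + C (-1)) ^ n := by
    rw [neg_pow]
    congr 1
    rw [map_pow, map_neg, map_one]
  rw [h, h2, coeff_C_mul, coeff_X_add_C_pow]
  by_cases hk : k ≤ n
  · have hmod : (n + (n - k)) % 2 = k % 2 := by omega
    calc ((-1 : ℤ)) ^ n * ((-1) ^ (n - k) * (n.choose k : ℤ))
        = (-1) ^ (n + (n - k)) * (n.choose k : ℤ) := by rw [pow_add]; ring
      _ = (-1) ^ k * (n.choose k : ℤ) := by rw [neg_one_pow_congr' hmod]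
  · simp [Nat.choose_eq_zero_of_lt (lt_of_not_ge hk)]

lemma zch_cast (a : ℕ) (b : ℤ) (hb : 0 ≤ b) : zch (a : ℤ) b = a.choose b.toNat := by
  unfold zch
  by_cases h : b ≤ (a : ℤ)
  · rw [if_pos ⟨hb, h⟩, Int.toNat_natCast]
  · rw [if_neg (fun hh => h hh.2)]
    symm
    apply Nat.choose_eq_zero_of_lt
    omega

lemma neg_one_pow_natAbs (m : ℕ) (j : ℕ) :
    ((-1 : ℤ)) ^ (((j : ℤ) - m).natAbs) = (-1) ^ (j + m) := by
  apply neg_one_pow_congr'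
  omega

lemma phi_eq_sum (u d r l : ℕ) :
    phi u d r l = ∑ k ∈ Finset.Icc (-(d : ℤ)) (u : ℤ),
      (-1) ^ k.natAbs * (zch ((r : ℤ) + u) ((u : ℤ) - k) : ℤ)
        * (zch ((l : ℤ) + d) ((d : ℤ) + k) : ℤ) := by
  unfold phi
  rw [mul_comm ((1 + X : ℤ[X]) ^ (r + u)) _, coeff_mul,
    Finset.Nat.sum_antidiagonal_eq_sum_range_succ_mk, Finset.mul_sum]
  refine Finset.sum_bij' (fun j _ => (j : ℤ) - d) (fun k _ => (k + d).toNat)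
    ?_ ?_ ?_ ?_ ?_
  · intro j hj
    simp only [Finset.mem_range] at hj
    simp only [Finset.mem_Icc]
    omega
  · intro k hk
    simp only [Finset.mem_Icc] at hk
    simp only [Finset.mem_range]
    omega
  · intro j hj
    simp only [Finset.mem_range] at hj
    omega
  · intro k hk
    simp only [Finset.mem_Icc] at hk
    omega
  · intro j hj
    simp only [Finset.mem_range] at hj
    rw [coeff_one_sub_X_pow, coeff_one_add_X_pow]
    have hc1 : ((r : ℤ) + u) = ((r + u : ℕ) : ℤ) := by push_cast; ring
    have hc2 : ((l : ℤ) + d) = ((l + d : ℕ) : ℤ) := by push_cast; ring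
    have hb1 : (0 : ℤ) ≤ (u : ℤ) - ((j : ℤ) - d) := by omega
    have hb2 : (0 : ℤ) ≤ (d : ℤ) + ((j : ℤ) - d) := by omega
    rw [hc1, hc2, zch_cast _ _ hb1, zch_cast _ _ hb2]
    have ht1 : ((u : ℤ) - ((j : ℤ) - d)).toNat = u + d - j := by omega
    have ht2 : ((d : ℤ) + ((j : ℤ) - d)).toNat = j := by omega
    rw [ht1, ht2, neg_one_pow_natAbs]
    rw [pow_add]
    push_cast
    ring

lemma w_eq_ite (σ : List Step) : w σ = if Even (peakCount σ) then 1 else -1 := by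
  unfold w
  split_ifs with h
  · exact h.neg_one_pow
  · exact (Nat.not_even_iff_odd.mp h).neg_one_pow

/-- **Theorem (peak-count mod 2 enumeration).**
The number of shuffles of `V` and `H` with even peak-count minus the number with odd
peak-count equals `Σ_k (−1)^k C(r+u, u−k) C(l+d, d+k)` (all nonzero terms of the sum over
all integers `k` occur for `−d ≤ k ≤ u`). -/
theorem even_sub_odd_peakCount (u d r l : ℕ) (V H : List Step)
    (hV : ∀ s ∈ V, isVert s = true)
    (hVu : V.count Step.N = u) (hVd : V.count Step.S = d)
    (hH : ∀ s ∈ H, isHoriz s = true)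
    (hHr : H.count Step.E = r) (hHl : H.count Step.W = l) :
    ({σ : List Step | IsShuffle V H σ ∧ Even (peakCount σ)}.ncard : ℤ)
      - ({σ : List Step | IsShuffle V H σ ∧ ¬ Even (peakCount σ)}.ncard : ℤ)
      = ∑ k ∈ Finset.Icc (-(d : ℤ)) (u : ℤ),
          (-1) ^ k.natAbs * (zch ((r : ℤ) + u) ((u : ℤ) - k) : ℤ)
            * (zch ((l : ℤ) + d) ((d : ℤ) + k) : ℤ) := by
  classical
  subst hVu hVd hHr hHl
  have hmem : ∀ σ, σ ∈ shuf V H ↔ IsShuffle V H σ :=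
    mem_shuf (V.length + H.length) V H le_rfl hV hH
  have hnd : (shuf V H).Nodup := nodup_shuf (V.length + H.length) V H le_rfl hV hH
  have hset1 : {σ : List Step | IsShuffle V H σ ∧ Even (peakCount σ)}
      = ↑((shuf V H).toFinset.filter (fun σ => Even (peakCount σ))) := by
    ext σ
    simp [← hmem σ]
  have hset2 : {σ : List Step | IsShuffle V H σ ∧ ¬ Even (peakCount σ)}
      = ↑((shuf V H).toFinset.filter (fun σ => ¬ Even (peakCount σ))) := by
    ext σ
    simp [← hmem σ]
  rw [hset1, hset2, Set.ncard_coe_finset, Set.ncard_coe_finset]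
  have key : (((shuf V H).toFinset.filter (fun σ => Even (peakCount σ))).card : ℤ)
      - (((shuf V H).toFinset.filter (fun σ => ¬ Even (peakCount σ))).card : ℤ)
      = ∑ σ ∈ (shuf V H).toFinset, w σ := by
    rw [Finset.sum_congr rfl (fun σ _ => w_eq_ite σ), Finset.sum_ite]
    simp only [Finset.sum_const, nsmul_eq_mul, mul_one, mul_neg]
    ring
  rw [key, List.sum_toFinset _ hnd]
  have : ((shuf V H).map w).sum = wsum (shuf V H) := rfl
  rw [this, wsum_shuf (V.length + H.length) V H le_rfl hV hH, phi_eq_sum]
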